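/- If λ is a left eigenvalue of a Hermitian quaternionic matrix S and v is a unit λ-eigenvector, then R(S,v) = v*λv = Re(λ); consequently t₁ ≤ Re(λ) ≤ t_n, where t₁ and t_n are the smallest and largest eigenvalues of S. -/

import Mathlib

open Quaternion Matrix

lemma matrix_mul_eq_one_comm_divring {n : ℕ} {K : Type*} [DivisionRing K]
    {A B : Matrix (Fin n) (Fin n) K} (h : A * B = 1) : B * A = 1 := by
  let f : (Fin n → K) →ₗ[K] (Fin n → K) :=
    { toFun := fun w => w ᵥ* B
      map_add' := fun x y => Matrix.add_vecMul B x y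
      map_smul' := fun r x => by
        ext j
        simp [Matrix.vecMul, dotProduct, Finset.mul_sum, mul_assoc] }
  let g : (Fin n → K) →ₗ[K] (Fin n → K) :=
    { toFun := fun w => w ᵥ* A
      map_add' := fun x y => Matrix.add_vecMul A x y
      map_smul' := fun r x => by
        ext j
        simp [Matrix.vecMul, dotProduct, Finset.mul_sum, mul_assoc] }
  have hfg : ∀ w, f (g w) = w := by
    intro w
    show (w ᵥ* A) ᵥ* B = w
    rw [Matrix.vecMul_vecMul, h, Matrix.vecMul_one]
  have hginj : Function.Injective g := by
    intro x y hxy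
    have h2 := congrArg f hxy
    rwa [hfg, hfg] at h2
  have hgsurj : Function.Surjective g :=
    (LinearMap.injective_iff_surjective (f := g)).mp hginj
  have hgf : ∀ w, (w ᵥ* B) ᵥ* A = w := by
    intro w
    obtain ⟨x, hx⟩ := hgsurj w
    have h3 : f w = x := by rw [← hx]; exact hfg x
    show g (f w) = w
    rw [h3, hx]
  refine Matrix.ext fun i j => ?_
  have h4 := congrFun (hgf (Pi.single i 1)) j
  rw [Matrix.vecMul_vecMul, Matrix.single_one_vecMul] at h4
  simpa [Matrix.one_apply, Pi.single_apply, eq_comm] using h4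

lemma quat_re_conj_mul (a q : ℍ[ℝ]) :
    (star a * (q * a)).re = q.re * Quaternion.normSq a := by
  simp [Quaternion.re_mul, Quaternion.normSq_def']
  ring

lemma quat_coe_sum {m : ℕ} (f : Fin m → ℝ) :
    ((∑ i, f i : ℝ) : ℍ[ℝ]) = ∑ i, (f i : ℍ[ℝ]) := by
  rw [← Quaternion.algebraMap_def, map_sum]

lemma quat_re_sum {m : ℕ} (f : Fin m → ℍ[ℝ]) :
    (∑ i, f i).re = ∑ i, (f i).re :=
  map_sum (QuaternionAlgebra.reₗ (-1 : ℝ) 0 (-1)) f Finset.univ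

theorem left_eigenvalue_rayleigh_real_part {n : ℕ} (hn : 0 < n)
    (S : Matrix (Fin n) (Fin n) ℍ[ℝ]) (hS : S.IsHermitian)
    (t : Fin n → ℝ) (ht : Monotone t) (u : Fin n → Fin n → ℍ[ℝ])
    (horth : ∀ i j, star (u i) ⬝ᵥ u j = if i = j then 1 else 0)
    (heig : ∀ j, S.mulVec (u j) = fun l => u j l * (t j : ℍ[ℝ]))
    (lam : ℍ[ℝ]) (v : Fin n → ℍ[ℝ]) (hv : ∑ i, ‖v i‖ ^ 2 = 1)
    (hveig : S.mulVec v = fun i => lam * v i) :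
    star v ⬝ᵥ S.mulVec v = star v ⬝ᵥ (fun i => lam * v i) ∧
    (star v ⬝ᵥ S.mulVec v) = (lam.re : ℍ[ℝ]) ∧
    t ⟨0, hn⟩ ≤ lam.re ∧ lam.re ≤ t ⟨n - 1, Nat.sub_lt hn one_pos⟩ := by
  classical
  set U : Matrix (Fin n) (Fin n) ℍ[ℝ] := Matrix.of (fun i j => u j i) with hUdef
  have hUtU : Uᴴ * U = 1 := by
    refine Matrix.ext fun i j => ?_
    have h1 := horth i j
    simpa [Matrix.mul_apply, Matrix.conjTranspose_apply, dotProduct,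
      Matrix.one_apply, hUdef] using h1
  have hUUt : U * Uᴴ = 1 := matrix_mul_eq_one_comm_divring hUtU
  obtain ⟨c, hcdef⟩ : ∃ c : Fin n → ℍ[ℝ], c = Uᴴ *ᵥ v := ⟨_, rfl⟩
  have hvc : U *ᵥ c = v := by
    rw [hcdef, Matrix.mulVec_mulVec, hUUt, Matrix.one_mulVec]
  have hSU : S * U = U * Matrix.diagonal (fun j => (t j : ℍ[ℝ])) := by
    refine Matrix.ext fun i j => ?_
    have h2 := congrFun (heig j) i
    simp only [Matrix.mulVec, dotProduct] at h2
    simp [Matrix.mul_apply, Matrix.diagonal, hUdef, h2]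
  have hstarc : star v ᵥ* U = star c := by
    rw [hcdef, Matrix.star_mulVec, Matrix.conjTranspose_conjTranspose]
  have hSv : S.mulVec v = U *ᵥ ((Matrix.diagonal (fun j => (t j : ℍ[ℝ]))) *ᵥ c) := by
    conv_lhs => rw [← hvc]
    rw [Matrix.mulVec_mulVec, hSU, ← Matrix.mulVec_mulVec]
  have hquad : star v ⬝ᵥ S.mulVec v
      = ∑ j, star (c j) * ((t j : ℍ[ℝ]) * c j) := by
    rw [hSv, dotProduct_mulVec, hstarc]
    simp [dotProduct, Matrix.mulVec_diagonal]
  have hnorm : star v ⬝ᵥ v = star c ⬝ᵥ c := by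
    symm
    rw [← hstarc, hcdef, dotProduct_mulVec, Matrix.vecMul_vecMul, hUUt,
      Matrix.vecMul_one]
  have hvnormSq : ∑ i, Quaternion.normSq (v i) = 1 := by
    rw [← hv]
    refine Finset.sum_congr rfl fun i _ => ?_
    rw [Quaternion.normSq_eq_norm_mul_self, sq]
  have hcnormSq : ∑ j, Quaternion.normSq (c j) = 1 := by
    have h5 : ((∑ i, Quaternion.normSq (v i) : ℝ) : ℍ[ℝ])
        = ((∑ j, Quaternion.normSq (c j) : ℝ) : ℍ[ℝ]) := by
      rw [quat_coe_sum, quat_coe_sum]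
      have h6 := hnorm
      simp only [dotProduct, Pi.star_apply, Quaternion.star_mul_self] at h6
      exact h6
    have h7 := Quaternion.coe_injective h5
    rw [hvnormSq] at h7
    exact h7.symm
  have hquad' : star v ⬝ᵥ S.mulVec v
      = ((∑ j, t j * Quaternion.normSq (c j) : ℝ) : ℍ[ℝ]) := by
    rw [hquad, quat_coe_sum]
    refine Finset.sum_congr rfl fun j _ => ?_
    rw [← mul_assoc, ← Quaternion.coe_commutes, mul_assoc,
      Quaternion.star_mul_self, ← Quaternion.coe_mul]
  have hre : (star v ⬝ᵥ S.mulVec v).re = lam.re := by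
    rw [hveig]
    have h7 : (star v ⬝ᵥ fun i => lam * v i)
        = ∑ i, star (v i) * (lam * v i) := rfl
    rw [h7, quat_re_sum]
    have h8 : ∀ i : Fin n, (star (v i) * (lam * v i)).re
        = lam.re * Quaternion.normSq (v i) := fun i => quat_re_conj_mul (v i) lam
    rw [Finset.sum_congr rfl fun i _ => h8 i, ← Finset.mul_sum, hvnormSq, mul_one]
  have hr : (∑ j, t j * Quaternion.normSq (c j)) = lam.re := by
    rw [← hre, hquad']
    simp
  refine ⟨by rw [hveig], ?_, ?_, ?_⟩
  · rw [hquad']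
    exact congrArg _ hr
  · rw [← hr]
    calc t ⟨0, hn⟩ = ∑ j, t ⟨0, hn⟩ * Quaternion.normSq (c j) := by
          rw [← Finset.mul_sum, hcnormSq, mul_one]
      _ ≤ ∑ j, t j * Quaternion.normSq (c j) := by
          refine Finset.sum_le_sum fun j _ => ?_
          exact mul_le_mul_of_nonneg_right (ht (Nat.zero_le _)) (Quaternion.normSq_nonneg)
  · rw [← hr]
    calc (∑ j, t j * Quaternion.normSq (c j))
        ≤ ∑ j, t ⟨n - 1, Nat.sub_lt hn one_pos⟩ * Quaternion.normSq (c j) := by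
          refine Finset.sum_le_sum fun j _ => ?_
          exact mul_le_mul_of_nonneg_right (ht (Nat.le_sub_one_of_lt j.isLt))
            (Quaternion.normSq_nonneg)
      _ = t ⟨n - 1, Nat.sub_lt hn one_pos⟩ := by
          rw [← Finset.mul_sum, hcnormSq, mul_one]
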